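/- Let μ : ℝ → ℝ be twice differentiable with μ'(u) > 0 for all u ∈ ℝ and M-self-concordant for some M > 0, i.e. |μ''(u)| ≤ M·μ'(u) for all u ∈ ℝ. Then for all u, v ∈ ℝ, one has μ'(u)·exp(−M·|v − u|) ≤ μ'(v) ≤ μ'(u)·exp(M·|v − u|). -/

import Mathlib

/-- For a twice differentiable, `M`-self-concordant link function `μ` with `μ' > 0` everywhere,
the derivative varies at most exponentially:
`μ'(u)·exp(−M·|v − u|) ≤ μ'(v) ≤ μ'(u)·exp(M·|v − u|)`. -/
theorem deriv_exp_bounds_of_self_concordant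
    (M : ℝ) (hM : 0 < M) (μ : ℝ → ℝ)
    (hdiff : Differentiable ℝ μ) (hdiff2 : Differentiable ℝ (deriv μ))
    (hpos : ∀ u : ℝ, 0 < deriv μ u)
    (hsc : ∀ u : ℝ, |deriv (deriv μ) u| ≤ M * deriv μ u) :
    ∀ u v : ℝ,
      deriv μ u * Real.exp (-(M * |v - u|)) ≤ deriv μ v ∧
      deriv μ v ≤ deriv μ u * Real.exp (M * |v - u|) := by
  intro u v
  set g : ℝ → ℝ := fun x => Real.log (deriv μ x) with hg
  have hgd : ∀ x : ℝ, HasDerivAt g (deriv (deriv μ) x / deriv μ x) x := by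
    intro x
    have h1 : HasDerivAt (deriv μ) (deriv (deriv μ) x) x := (hdiff2 x).hasDerivAt
    have := (Real.hasDerivAt_log (hpos x).ne').comp x h1
    rw [div_eq_inv_mul]; exact this
  have hbound : ∀ x : ℝ, ‖deriv (deriv μ) x / deriv μ x‖ ≤ M := by
    intro x
    rw [Real.norm_eq_abs, abs_div, abs_of_pos (hpos x),
      div_le_iff₀ (hpos x)]
    exact hsc x
  have key : |g v - g u| ≤ M * |v - u| := by
    have := Convex.norm_image_sub_le_of_norm_hasDerivWithin_le
      (f := g) (f' := fun x => deriv (deriv μ) x / deriv μ x) (C := M)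
      (fun x _ => (hgd x).hasDerivWithinAt) (fun x _ => hbound x)
      convex_univ (Set.mem_univ u) (Set.mem_univ v)
    simpa [Real.norm_eq_abs] using this
  rw [abs_le] at key
  have h1 := key.1
  have h2 := key.2
  have hgu : Real.exp (g u) = deriv μ u := Real.exp_log (hpos u)
  have hgv : Real.exp (g v) = deriv μ v := Real.exp_log (hpos v)
  constructor
  · have : g u - M * |v - u| ≤ g v := by linarith
    calc deriv μ u * Real.exp (-(M * |v - u|)) = Real.exp (g u - M * |v - u|) := by
          rw [Real.exp_sub, Real.exp_neg, hgu, div_eq_mul_inv]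
      _ ≤ Real.exp (g v) := Real.exp_le_exp.mpr this
      _ = deriv μ v := hgv
  · have : g v ≤ g u + M * |v - u| := by linarith
    calc deriv μ v = Real.exp (g v) := hgv.symm
      _ ≤ Real.exp (g u + M * |v - u|) := Real.exp_le_exp.mpr this
      _ = deriv μ u * Real.exp (M * |v - u|) := by rw [Real.exp_add, hgu]
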